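/- arXiv:1512.04368 — 4 statements merged into one kernel-verified Lean document; each statement's English description precedes it below -/
import Mathlib

section
/- Fix $d\ge 1$ and $\eta\in(0,1)$. Let $(p_w)_{w\in\Sigma^*}$ be independent Bernoulli variables indexed by finite words over $\{0,1\}^d$ with $\mathbb{P}(p_w=1)=2^{-d(1-\eta)|w|}$. Set $\epsilon_j=(\log^2 j)/j$. Then almost surely, for all sufficiently large $j$, every word $W$ of length $\lfloor j(\eta-\epsilon_j)\rfloor$ admits an extension $w$ of length $j$ (with $W$ a prefix of $w$) such that $p_w=1$. -/
open MeasureTheory ProbabilityTheory Filter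
open scoped ENNReal

set_option maxHeartbeats 2000000 in
/-- With `ε_j = (log j)^2 / j`, almost surely, for all large `j`, every word `W` of
length `⌊j(η-ε_j)⌋` admits a surviving extension of length `j`. -/
theorem statement3 (d : ℕ) (hd : 1 ≤ d)
    {Ω : Type*} [MeasurableSpace Ω] (P : Measure Ω) [IsProbabilityMeasure P]
    (η : ℝ) (hη0 : 0 < η) (hη1 : η < 1)
    (p : List (Fin d → Bool) → Ω → Bool)
    (hmeas : ∀ w, Measurable (p w))
    (hindep : iIndepFun (m := fun _ : List (Fin d → Bool) => (inferInstance : MeasurableSpace Bool)) p P)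
    (hbern : ∀ w : List (Fin d → Bool),
      P {ω | p w ω = true} = ENNReal.ofReal ((2:ℝ) ^ (-(d:ℝ) * (1 - η) * (w.length : ℝ)))) :
    ∀ᵐ ω ∂P, ∀ᶠ j : ℕ in atTop, ∀ W : List (Fin d → Bool),
      W.length = ⌊(j:ℝ) * (η - (Real.log j)^2 / j)⌋₊ →
      ∃ w : List (Fin d → Bool), W <+: w ∧ w.length = j ∧ p w ω = true := by
  classical
  set m : ℕ → ℕ := fun j => ⌊(j:ℝ) * (η - (Real.log j)^2 / j)⌋₊ with hmdef
  set B : ℕ → Set Ω := fun j => {ω | ¬ ∀ W : List (Fin d → Bool), W.length = m j →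
      ∃ w, W <+: w ∧ w.length = j ∧ p w ω = true} with hBdef
  have hlog2 : (0:ℝ) < Real.log 2 := Real.log_pos one_lt_two
  have hlog2le : Real.log 2 ≤ 1 := by
    have := Real.log_le_sub_one_of_pos (by norm_num : (0:ℝ) < 2); linarith
  have hev : ∀ᶠ j : ℕ in atTop, P (B j) ≤ ENNReal.ofReal (((j:ℝ)^2)⁻¹) := by
    have h1 : ∀ᶠ x : ℝ in atTop, (Real.log x)^2 / (1*x+0) < η :=
      (Real.tendsto_pow_log_div_mul_add_atTop 1 0 2 one_ne_zero).eventually (gt_mem_nhds hη0)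
    have h2 : ∀ᶠ j : ℕ in atTop, ((Real.log j)^2) / (1*(j:ℝ)+0) < η :=
      tendsto_natCast_atTop_atTop.eventually h1
    have h3 : ∀ᶠ j : ℕ in atTop, Real.exp (3 / Real.log 2) ≤ (j:ℝ) :=
      tendsto_natCast_atTop_atTop.eventually (eventually_ge_atTop _)
    filter_upwards [h2, eventually_ge_atTop (d+2), eventually_ge_atTop 1, h3]
      with j hj1 hj2 hj3 hj4
    have hj0 : (1:ℝ) ≤ (j:ℝ) := by exact_mod_cast hj3
    have hjpos : (0:ℝ) < j := by linarith
    have hL2 : (Real.log j)^2 < η * j := by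
      rw [one_mul, add_zero, div_lt_iff₀ hjpos] at hj1; linarith
    have hLpos : (0:ℝ) ≤ (Real.log j)^2 := sq_nonneg _
    have hLlog : 3 / Real.log 2 ≤ Real.log j := by
      exact (Real.le_log_iff_exp_le hjpos).2 hj4
    have hdj : ((d:ℝ) + 2) ≤ (j:ℝ) := by exact_mod_cast hj2
    have hd1 : (1:ℝ) ≤ (d:ℝ) := by exact_mod_cast hd
    -- floor facts
    have hargeq : (j:ℝ) * (η - (Real.log j)^2 / j) = η * j - (Real.log j)^2 := by
      field_simp
    have hmj_le : (m j : ℝ) ≤ η * j - (Real.log j)^2 := by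
      have hnn : (0:ℝ) ≤ (j:ℝ) * (η - (Real.log j)^2 / j) := by
        rw [hargeq]; linarith
      calc (m j : ℝ) ≤ (j:ℝ) * (η - (Real.log j)^2 / j) := Nat.floor_le hnn
        _ = η * j - (Real.log j)^2 := hargeq
    have hmlej : m j ≤ j := by
      apply Nat.floor_le_of_le
      rw [hargeq]; nlinarith
    have hmjr : (m j : ℝ) ≤ (j:ℝ) := by exact_mod_cast hmlej
    -- the survival probability
    set x : ℝ := (2:ℝ) ^ (-(d:ℝ) * (1 - η) * (j:ℝ)) with hxdef
    have hx0 : 0 ≤ x := Real.rpow_nonneg (by norm_num) _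
    have hx1 : x ≤ 1 := by
      apply Real.rpow_le_one_of_one_le_of_nonpos one_le_two
      have : (0:ℝ) ≤ (d:ℝ) * (1 - η) * j :=
        mul_nonneg (mul_nonneg (by positivity) (by linarith)) (by positivity)
      linarith
    set N : ℕ := (2^d) ^ (j - m j) with hNdef
    set Af := fun (f : Fin (m j) → (Fin d → Bool)) =>
      ⋂ g : Fin (j - m j) → (Fin d → Bool),
        {ω | p (List.ofFn f ++ List.ofFn g) ω = false} with hAdef
    have hsub : B j ⊆ ⋃ f, Af f := by
      intro ω hω
      simp only [hBdef, Set.mem_setOf_eq] at hω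
      push_neg at hω
      obtain ⟨W, hWlen, hWfail⟩ := hω
      obtain ⟨f, hf⟩ : ∃ f : Fin (m j) → (Fin d → Bool), List.ofFn f = W := by
        refine ⟨fun i => W.get (Fin.cast hWlen.symm i), ?_⟩
        apply List.ext_getElem (by simp [hWlen])
        intro i h1 h2
        simp [List.getElem_ofFn]
      refine Set.mem_iUnion.2 ⟨f, Set.mem_iInter.2 fun g => ?_⟩
      have hpre : W <+: List.ofFn f ++ List.ofFn g := hf ▸ List.prefix_append _ _
      have hlen : (List.ofFn f ++ List.ofFn g).length = j := by
        simp only [List.length_append, List.length_ofFn]; omega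
      have := hWfail (List.ofFn f ++ List.ofFn g) hpre hlen
      simpa using this
    have hAmeas : ∀ f, P (Af f) = ENNReal.ofReal ((1 - x) ^ N) := by
      intro f
      have hinj : Function.Injective
          (fun g : Fin (j - m j) → (Fin d → Bool) => List.ofFn f ++ List.ofFn g) := by
        intro g1 g2 h
        exact List.ofFn_injective (List.append_cancel_left h)
      have hre : Af f = ⋂ w ∈ Finset.image
          (fun g : Fin (j - m j) → (Fin d → Bool) => List.ofFn f ++ List.ofFn g) Finset.univ,
          (p w ⁻¹' {false}) := by
        rw [Finset.set_biInter_finset_image]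
        ext ω
        simp [hAdef]
      rw [hre, hindep.meas_biInter (fun w _ => ⟨{false}, trivial, rfl⟩)]
      have hval : ∀ w ∈ Finset.image
          (fun g : Fin (j - m j) → (Fin d → Bool) => List.ofFn f ++ List.ofFn g) Finset.univ,
          P (p w ⁻¹' {false}) = 1 - ENNReal.ofReal x := by
        intro w hw
        obtain ⟨g, -, rfl⟩ := Finset.mem_image.1 hw
        have hc : p (List.ofFn f ++ List.ofFn g) ⁻¹' {false}
            = (p (List.ofFn f ++ List.ofFn g) ⁻¹' {true})ᶜ := by
          ext ω; simp
        rw [hc, measure_compl (hmeas _ (measurableSet_singleton true)) (measure_ne_top _ _),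
          measure_univ,
          show p (List.ofFn f ++ List.ofFn g) ⁻¹' {true}
            = {ω | p (List.ofFn f ++ List.ofFn g) ω = true} from rfl, hbern]
        congr 2
        simp only [List.length_append, List.length_ofFn]
        congr 1
        push_cast [Nat.add_sub_cancel' hmlej]
        ring
      rw [Finset.prod_congr rfl hval, Finset.prod_const,
        Finset.card_image_of_injective _ hinj]
      have hcard : (Finset.univ : Finset (Fin (j - m j) → (Fin d → Bool))).card = N := by
        simp [hNdef, Fintype.card_fun]
      rw [hcard]
      rw [show (1:ℝ≥0∞) - ENNReal.ofReal x = ENNReal.ofReal (1 - x) by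
        rw [ENNReal.ofReal_sub 1 hx0, ENNReal.ofReal_one]]
      rw [ENNReal.ofReal_pow (by linarith)]
    -- real-number estimate
    have hNx : Real.log 2 * ((d:ℝ) * j) + 2 * Real.log j ≤ (N:ℝ) * x := by
      have e1 : (N:ℝ) * x = (2:ℝ) ^ (((d * (j - m j) : ℕ) : ℝ) + -(d:ℝ) * (1 - η) * j) := by
        rw [Real.rpow_add (by norm_num : (0:ℝ) < 2), Real.rpow_natCast, hxdef, hNdef]
        push_cast [pow_mul]
        ring
      have e2 : (Real.log j)^2 ≤ ((d * (j - m j) : ℕ) : ℝ) + -(d:ℝ) * (1 - η) * j := by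
        rw [Nat.cast_mul, Nat.cast_sub hmlej]
        nlinarith
      have e3 : (2:ℝ) ^ ((Real.log j)^2) ≤ (N:ℝ) * x := by
        rw [e1]
        exact Real.rpow_le_rpow_of_exponent_le one_le_two e2
      have e4 : (2:ℝ) ^ ((Real.log j)^2) = Real.exp (Real.log 2 * (Real.log j)^2) :=
        Real.rpow_def_of_pos (by norm_num) _
      have e5 : Real.log 2 * ((d:ℝ) * j) + 2 * Real.log j ≤ (j:ℝ)^3 := by
        have hlogj : Real.log j ≤ (j:ℝ) - 1 := Real.log_le_sub_one_of_pos hjpos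
        have hdnn : (0:ℝ) ≤ (d:ℝ) := by positivity
        have h1 : Real.log 2 * ((d:ℝ)*j) ≤ (d:ℝ)*j := by
          nlinarith [mul_nonneg hdnn hjpos.le]
        have h2 : 2*Real.log j ≤ 2*(j:ℝ) := by linarith
        have h3 : (d:ℝ)*j + 2*(j:ℝ) ≤ (j:ℝ)*j := by nlinarith
        have h4 : (j:ℝ)*j ≤ (j:ℝ)^3 := by nlinarith
        linarith
      have e6 : ((j:ℝ))^3 ≤ Real.exp (Real.log 2 * (Real.log j)^2) := by
        have hL0 : (0:ℝ) ≤ Real.log j := le_trans (by positivity) hLlog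
        have h3L : 3 * Real.log j ≤ Real.log 2 * (Real.log j)^2 := by
          have : 3 ≤ Real.log 2 * Real.log j := by
            rw [← div_le_iff₀' hlog2]; exact hLlog
          nlinarith
        calc ((j:ℝ))^3 = Real.exp (Real.log j) ^ 3 := by rw [Real.exp_log hjpos]
          _ = Real.exp ((3:ℕ) * Real.log j) := by rw [Real.exp_nat_mul]
          _ ≤ Real.exp (Real.log 2 * (Real.log j)^2) := by
              apply Real.exp_le_exp.2; push_cast; linarith
      linarith [e3, e4 ▸ le_trans e6 (le_of_eq rfl), le_trans e5 (le_trans e6 (le_of_eq e4.symm))]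
    have hreal : (((2:ℝ)^d) ^ (m j)) * (1 - x) ^ N ≤ ((j:ℝ)^2)⁻¹ := by
      have e2 : ((2:ℝ)^d) ^ (m j) = Real.exp (((d * m j : ℕ) : ℝ) * Real.log 2) := by
        rw [← pow_mul, ← Real.log_pow, Real.exp_log (pow_pos (by norm_num) _)]
      have e3 : (1 - x) ^ N ≤ Real.exp (-((N:ℝ) * x)) := by
        calc (1 - x) ^ N ≤ (Real.exp (-x)) ^ N := by
              apply pow_le_pow_left₀ (by linarith)
              linarith [Real.add_one_le_exp (-x)]
          _ = Real.exp ((N:ℝ) * (-x)) := by rw [Real.exp_nat_mul]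
          _ = Real.exp (-((N:ℝ) * x)) := by ring_nf
      calc (((2:ℝ)^d) ^ (m j)) * (1 - x) ^ N
          ≤ Real.exp (((d * m j : ℕ) : ℝ) * Real.log 2) * Real.exp (-((N:ℝ) * x)) := by
            rw [e2]
            exact mul_le_mul_of_nonneg_left e3 (Real.exp_pos _).le
        _ = Real.exp (((d * m j : ℕ) : ℝ) * Real.log 2 - (N:ℝ) * x) := by
            rw [← Real.exp_add]; ring_nf
        _ ≤ Real.exp (-(2 * Real.log j)) := by
            apply Real.exp_le_exp.2
            have hstep : ((d * m j : ℕ) : ℝ) * Real.log 2 ≤ Real.log 2 * ((d:ℝ) * j) := by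
              push_cast
              nlinarith [mul_nonneg (mul_nonneg hlog2.le
                (by positivity : (0:ℝ) ≤ (d:ℝ))) (sub_nonneg.2 hmjr)]
            linarith
        _ = ((j:ℝ)^2)⁻¹ := by
            rw [Real.exp_neg]
            congr 1
            rw [show (2:ℝ) * Real.log j = ((2:ℕ):ℝ) * Real.log j by norm_num,
              Real.exp_nat_mul, Real.exp_log hjpos]
    -- combine
    calc P (B j) ≤ P (⋃ f, Af f) := measure_mono hsub
      _ ≤ ∑ f : Fin (m j) → (Fin d → Bool), P (Af f) := measure_iUnion_fintype_le _ _
      _ = (Fintype.card (Fin (m j) → (Fin d → Bool))) * ENNReal.ofReal ((1 - x) ^ N) := by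
          rw [Finset.sum_congr rfl (fun f _ => hAmeas f), Finset.sum_const, nsmul_eq_mul,
            Finset.card_univ]
      _ = ENNReal.ofReal ((((2:ℝ)^d) ^ (m j)) * (1 - x) ^ N) := by
          have hc2 : ((Fintype.card (Fin (m j) → (Fin d → Bool)) : ℕ) : ℝ)
              = ((2:ℝ)^d) ^ (m j) := by
            simp [Fintype.card_fun]
          rw [ENNReal.ofReal_mul (by positivity), ← hc2, ENNReal.ofReal_natCast]
      _ ≤ ENNReal.ofReal (((j:ℝ)^2)⁻¹) := ENNReal.ofReal_le_ofReal hreal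
  -- Borel-Cantelli
  have hsum : (∑' j, P (B j)) ≠ ∞ := by
    obtain ⟨j0, hj0⟩ := eventually_atTop.1 hev
    have hle : ∀ j, P (B j) ≤
        Set.indicator ↑(Finset.range j0) (fun _ => (1:ℝ≥0∞)) j + ENNReal.ofReal (((j:ℝ)^2)⁻¹) := by
      intro j
      by_cases h : j < j0
      · calc P (B j) ≤ 1 := prob_le_one
          _ ≤ _ := by
            rw [Set.indicator_of_mem (by simpa using h)]
            exact le_self_add
      · exact le_trans (hj0 j (not_lt.1 h)) le_add_self
    have hsummable : Summable (fun j : ℕ => ((j:ℝ)^2)⁻¹) := by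
      have := Real.summable_one_div_nat_pow.mpr (le_refl 2)
      simpa [one_div] using this
    have hlt : (∑' j, P (B j)) < ∞ := by
      calc (∑' j, P (B j))
          ≤ ∑' j : ℕ, (Set.indicator ↑(Finset.range j0) (fun _ => (1:ℝ≥0∞)) j
              + ENNReal.ofReal (((j:ℝ)^2)⁻¹)) := ENNReal.tsum_le_tsum hle
        _ = (∑' j : ℕ, Set.indicator ↑(Finset.range j0) (fun _ => (1:ℝ≥0∞)) j)
              + ∑' j : ℕ, ENNReal.ofReal (((j:ℝ)^2)⁻¹) := ENNReal.tsum_add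
        _ < ∞ := by
            apply ENNReal.add_lt_top.2
            constructor
            · have hz : ∀ b ∉ Finset.range j0,
                  Set.indicator ↑(Finset.range j0) (fun _ => (1:ℝ≥0∞)) b = 0 := by
                intro b hb
                exact Set.indicator_of_notMem (by simpa using hb) _
              rw [tsum_eq_sum hz]
              refine lt_of_le_of_lt (Finset.sum_le_card_nsmul _ _ 1 (fun b _ => ?_)) ?_
              · exact Set.indicator_apply_le (fun _ => le_refl _)
              · simp [lt_top_iff_ne_top]
            · rw [← ENNReal.ofReal_tsum_of_nonneg (fun n => by positivity) hsummable]
              exact ENNReal.ofReal_lt_top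
    exact hlt.ne
  have h := MeasureTheory.ae_eventually_notMem hsum
  filter_upwards [h] with ω hω
  filter_upwards [hω] with j hj
  exact not_not.mp hj
end

section
/- Let $\tau:\mathbb{R}\to\mathbb{R}$ be concave, let $q_0\in\mathbb{R}$, $c\ge 0$ and $h\ge 0$ satisfy $\tau(q_0)+c = \tau(q_0)+ h q_0$ (i.e. $c=hq_0$). Define $\tilde\tau(q)=\tau(q)+hq$ for $q\le q_0$ and $\tilde\tau(q)=\tau(q)+c$ for $q> q_0$. Then $\tilde\tau$ is concave and its Legendre transform satisfies: $\tilde\tau^*(H)=\tau^*(H-h)$ for $H\ge \tau'(q_0^-)+h$, $\tilde\tau^*(H)=q_0 H-\tau(q_0)-c$ for $\tau'(q_0^+)\le H\le \tau'(q_0^-)+h$, and $\tilde\tau^*(H)=\tau^*(H)-c$ for $H\le\tau'(q_0^+)$, where $\tau^*(H)=\inf_q(Hq-\tau(q))$. -/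
open Filter

/-- The (concave) Legendre transform `g^*(H) = inf_q (Hq - g(q))`, with values in `EReal`. -/
noncomputable def legendreTransform (g : ℝ → ℝ) (H : ℝ) : EReal :=
  ⨅ q : ℝ, ((H * q - g q : ℝ) : EReal)

private lemma ereal_iInf_le_iInf {f g : ℝ → ℝ} (h : ∀ q, ∃ q', f q' ≤ g q) :
    (⨅ q : ℝ, ((f q : ℝ) : EReal)) ≤ ⨅ q : ℝ, ((g q : ℝ) : EReal) :=
  le_iInf fun q => (h q).elim fun q' hq' => iInf_le_of_le q' (EReal.coe_le_coe_iff.mpr hq')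

private lemma ereal_iInf_eq_iInf {f g : ℝ → ℝ} (h1 : ∀ q, ∃ q', f q' ≤ g q)
    (h2 : ∀ q, ∃ q', g q' ≤ f q) :
    (⨅ q : ℝ, ((f q : ℝ) : EReal)) = ⨅ q : ℝ, ((g q : ℝ) : EReal) :=
  le_antisymm (ereal_iInf_le_iInf h1) (ereal_iInf_le_iInf h2)

private lemma ereal_iInf_sub (f : ℝ → ℝ) (c : ℝ) :
    (⨅ q : ℝ, ((f q - c : ℝ) : EReal)) = (⨅ q : ℝ, ((f q : ℝ) : EReal)) - (c : EReal) := by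
  apply le_antisymm
  · rw [EReal.le_sub_iff_add_le (Or.inl (EReal.coe_ne_bot c)) (Or.inl (EReal.coe_ne_top c))]
    refine le_iInf fun q => ?_
    calc (⨅ q : ℝ, ((f q - c : ℝ) : EReal)) + (c : EReal)
        ≤ ((f q - c : ℝ) : EReal) + (c : EReal) := add_le_add (iInf_le _ q) le_rfl
      _ = ((f q : ℝ) : EReal) := by norm_cast; ring
  · refine le_iInf fun q => ?_
    calc (⨅ q : ℝ, ((f q : ℝ) : EReal)) - (c : EReal)
        ≤ ((f q : ℝ) : EReal) - (c : EReal) := EReal.sub_le_sub (iInf_le _ q) le_rfl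
      _ = ((f q - c : ℝ) : EReal) := by norm_cast

/-- Legendre transform of a tilted/shifted concave function: if `τ` is concave,
`c = h q₀` with `c, h ≥ 0`, and `τ̃(q) = τ(q) + hq` for `q ≤ q₀`, `τ̃(q) = τ(q) + c`
for `q > q₀`, then `τ̃` is concave and its Legendre transform is a translate of `τ^*`
on the right, linear in the middle, and `τ^* - c` on the left. -/
theorem statement11 (τ : ℝ → ℝ) (hconc : ConcaveOn ℝ Set.univ τ)
    (q₀ c h Dm Dp : ℝ) (hc : 0 ≤ c) (hh : 0 ≤ h) (hch : c = h * q₀)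
    (hDm : HasDerivWithinAt τ Dm (Set.Iio q₀) q₀)
    (hDp : HasDerivWithinAt τ Dp (Set.Ioi q₀) q₀) :
    ConcaveOn ℝ Set.univ (fun q => if q ≤ q₀ then τ q + h * q else τ q + c) ∧
    (∀ H : ℝ, Dm + h ≤ H →
      legendreTransform (fun q => if q ≤ q₀ then τ q + h * q else τ q + c) H
        = legendreTransform τ (H - h)) ∧
    (∀ H : ℝ, Dp ≤ H → H ≤ Dm + h →
      legendreTransform (fun q => if q ≤ q₀ then τ q + h * q else τ q + c) H
        = ((q₀ * H - τ q₀ - c : ℝ) : EReal)) ∧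
    (∀ H : ℝ, H ≤ Dp →
      legendreTransform (fun q => if q ≤ q₀ then τ q + h * q else τ q + c) H
        = legendreTransform τ H - (c : EReal)) := by
  -- slope monotonicity
  have hslope : ∀ x y : ℝ, x ≤ y → x ≠ q₀ → y ≠ q₀ →
      (τ y - τ q₀) / (y - q₀) ≤ (τ x - τ q₀) / (x - q₀) := by
    intro x y hxy hx hy
    have := hconc.neg.secant_mono (a := q₀) (Set.mem_univ _) (Set.mem_univ _)
      (Set.mem_univ _) hx hy hxy
    simp only [Pi.neg_apply] at this
    rw [show -τ x - -τ q₀ = -(τ x - τ q₀) by ring, show -τ y - -τ q₀ = -(τ y - τ q₀) by ring,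
      neg_div, neg_div, neg_le_neg_iff] at this
    exact this
  have tm : Tendsto (fun x => (τ x - τ q₀) / (x - q₀)) (nhdsWithin q₀ (Set.Iio q₀)) (nhds Dm) := by
    have := hasDerivWithinAt_iff_tendsto_slope.mp hDm
    rw [Set.diff_singleton_eq_self (by simp)] at this
    simpa [slope_fun_def_field] using this
  have tp : Tendsto (fun x => (τ x - τ q₀) / (x - q₀)) (nhdsWithin q₀ (Set.Ioi q₀)) (nhds Dp) := by
    have := hasDerivWithinAt_iff_tendsto_slope.mp hDp
    rw [Set.diff_singleton_eq_self (by simp)] at this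
    simpa [slope_fun_def_field] using this
  have hA' : ∀ q, q < q₀ → Dm ≤ (τ q - τ q₀) / (q - q₀) := by
    intro q hq
    refine le_of_tendsto tm ?_
    have hmem : Set.Ioi q ∈ nhdsWithin q₀ (Set.Iio q₀) :=
      nhdsWithin_le_nhds (Ioi_mem_nhds hq)
    filter_upwards [hmem, self_mem_nhdsWithin] with x hx1 hx2
    exact hslope q x (le_of_lt hx1) (ne_of_lt hq) (ne_of_lt hx2)
  have hB' : ∀ q, q₀ < q → (τ q - τ q₀) / (q - q₀) ≤ Dp := by
    intro q hq
    refine ge_of_tendsto tp ?_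
    have hmem : Set.Iio q ∈ nhdsWithin q₀ (Set.Ioi q₀) :=
      nhdsWithin_le_nhds (Iio_mem_nhds hq)
    filter_upwards [hmem, self_mem_nhdsWithin] with x hx1 hx2
    exact hslope x q (le_of_lt hx1) (ne_of_gt hx2) (ne_of_gt hq)
  have hC : Dp ≤ Dm := by
    have h1 : ∀ x, x < q₀ → Dp ≤ (τ x - τ q₀) / (x - q₀) := by
      intro x hx
      refine le_of_tendsto tp ?_
      filter_upwards [self_mem_nhdsWithin] with y hy
      exact hslope x y (le_of_lt (hx.trans hy)) (ne_of_lt hx) (ne_of_gt hy)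
    refine ge_of_tendsto tm ?_
    filter_upwards [self_mem_nhdsWithin] with x hx
    exact h1 x hx
  have lA : ∀ q, q ≤ q₀ → τ q ≤ τ q₀ + Dm * (q - q₀) := by
    intro q hq
    rcases eq_or_lt_of_le hq with rfl | hq'
    · simp
    · have hs := hA' q hq'
      have h0 : q - q₀ < 0 := by linarith
      have := mul_le_mul_of_nonpos_right hs (le_of_lt h0)
      rw [div_mul_cancel₀ _ (ne_of_lt h0)] at this
      linarith
  have lB : ∀ q, q₀ ≤ q → τ q ≤ τ q₀ + Dp * (q - q₀) := by
    intro q hq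
    rcases eq_or_lt_of_le hq with rfl | hq'
    · simp
    · have hs := hB' q hq'
      have h0 : 0 < q - q₀ := by linarith
      have := mul_le_mul_of_nonneg_right hs (le_of_lt h0)
      rw [div_mul_cancel₀ _ (ne_of_gt h0)] at this
      linarith
  -- concavity of the tilted function
  have hconcT : ConcaveOn ℝ Set.univ (fun q => if q ≤ q₀ then τ q + h * q else τ q + c) := by
    have h1 : ConcaveOn ℝ Set.univ (fun q : ℝ => τ q + h * q) := by
      refine hconc.add ⟨convex_univ, ?_⟩
      intro x _ y _ a b _ _ _
      simp only [smul_eq_mul]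
      ring_nf
      exact le_refl _
    have h2 : ConcaveOn ℝ Set.univ (fun q : ℝ => τ q + c) := by
      refine hconc.add ⟨convex_univ, ?_⟩
      intro x _ y _ a b _ _ hab
      simp only [smul_eq_mul]
      nlinarith
    have := h1.inf h2
    convert this using 1
    case e'_8 => rfl
    case e'_10 => rfl
    funext q
    simp only [Pi.inf_apply]
    by_cases hq : q ≤ q₀
    · rw [if_pos hq, min_eq_left]
      have : h * q ≤ h * q₀ := mul_le_mul_of_nonneg_left hq hh
      linarith [hch ▸ this]
    · rw [if_neg hq, min_eq_right]
      push_neg at hq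
      have : h * q₀ ≤ h * q := mul_le_mul_of_nonneg_left (le_of_lt hq) hh
      linarith [hch ▸ this]
  refine ⟨hconcT, ?_, ?_, ?_⟩
  · -- right regime
    intro H hH
    unfold legendreTransform
    apply ereal_iInf_eq_iInf
    · intro q
      by_cases hq : q ≤ q₀
      · exact ⟨q, by simp only [if_pos hq]; ring_nf; exact le_refl _⟩
      · push_neg at hq
        refine ⟨q₀, ?_⟩
        simp only [if_pos le_rfl]
        have := lB q (le_of_lt hq)
        nlinarith [this, hC, hq, hH]
    · intro q
      by_cases hq : q ≤ q₀
      · exact ⟨q, by simp only [if_pos hq]; ring_nf; exact le_refl _⟩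
      · push_neg at hq
        refine ⟨q₀, ?_⟩
        have := lB q (le_of_lt hq)
        have hHDp : Dp ≤ H := by linarith
        have hif : (if q ≤ q₀ then τ q + h * q else τ q + c) = τ q + c := if_neg (not_le.mpr hq)
        simp only [hif]
        nlinarith [this, hq, hHDp]
  · -- middle regime
    intro H hH1 hH2
    unfold legendreTransform
    apply le_antisymm
    · refine iInf_le_of_le q₀ ?_
      simp only [if_pos le_rfl]
      apply le_of_eq
      norm_cast
      rw [hch]; ring
    · refine le_iInf fun q => ?_
      rw [EReal.coe_le_coe_iff]
      by_cases hq : q ≤ q₀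
      · simp only [if_pos hq]
        have := lA q hq
        nlinarith [this, hq, hH2]
      · push_neg at hq
        simp only [if_neg (not_le.mpr hq)]
        have := lB q (le_of_lt hq)
        nlinarith [this, hq, hH1]
  · -- left regime
    intro H hH
    unfold legendreTransform
    have key : (⨅ q : ℝ, ((H * q - (if q ≤ q₀ then τ q + h * q else τ q + c) : ℝ) : EReal))
        = ⨅ q : ℝ, (((H * q - τ q) - c : ℝ) : EReal) := by
      apply ereal_iInf_eq_iInf
      · intro q
        by_cases hq : q ≤ q₀
        · refine ⟨q₀, ?_⟩
          simp only [if_pos le_rfl]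
          have := lA q hq
          nlinarith [this, hq, hH, hC]
        · push_neg at hq
          refine ⟨q, ?_⟩
          simp only [if_neg (not_le.mpr hq)]
          ring_nf
          exact le_refl _
      · intro q
        by_cases hq : q ≤ q₀
        · refine ⟨q, ?_⟩
          simp only [if_pos hq]
          have : h * q ≤ h * q₀ := mul_le_mul_of_nonneg_left hq hh
          nlinarith [this]
        · refine ⟨q, ?_⟩
          simp only [if_neg hq]
          ring_nf
          exact le_refl _
    rw [key]
    exact ereal_iInf_sub (fun q => H * q - τ q) c
end

section
/- Fix $d\ge1$, $\eta\in(0,1)$, $\eta'\in(0,\eta]$, $\epsilon\in(0,\eta'/(4d)]$. Suppose for each $j$, and each word $W$ of length $\lfloor\eta' j\rfloor$, we are given a set $T_j(W)$ of extensions of $W$ of length $j$ with $\#T_j(W)\le 2^{d(1-\eta)j}2^{d\epsilon^2 j+d}$, and each $w\in T_j(W)$ independently survives with probability $2^{-d(1-\eta)j}$. Then almost surely, for all $j$ large enough and all $W\in\Sigma_{\lfloor\eta' j\rfloor}$, the number of surviving elements of $T_j(W)$ is at most $2^{\epsilon\eta' j}$. -/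
open MeasureTheory ProbabilityTheory Filter
open scoped ENNReal NNReal

lemma aux_prob_bound {d : ℕ} {η : ℝ} {Ω : Type*} [MeasurableSpace Ω] (P : Measure Ω)
    (p : List (Fin d → Bool) → Ω → Bool)
    (hindep : iIndepFun p P)
    (hbern : ∀ w : List (Fin d → Bool),
      P {ω | p w ω = true} = ENNReal.ofReal ((2:ℝ) ^ (-(d:ℝ) * (1 - η) * (w.length : ℝ))))
    (j l : ℕ) (S : Finset (List (Fin d → Bool))) (hS : ∀ w ∈ S, w.length = j) :
    P {ω | l ≤ (S.filter (fun w => p w ω = true)).card}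
      ≤ (S.card.choose l : ℝ≥0∞) *
        (ENNReal.ofReal ((2:ℝ) ^ (-(d:ℝ) * (1 - η) * (j:ℝ)))) ^ l := by
  classical
  set q : ℝ≥0∞ := ENNReal.ofReal ((2:ℝ) ^ (-(d:ℝ) * (1 - η) * (j:ℝ))) with hq
  have hsub : {ω | l ≤ (S.filter (fun w => p w ω = true)).card}
      ⊆ ⋃ A ∈ S.powersetCard l, ⋂ w ∈ A, {ω | p w ω = true} := by
    intro ω hω
    obtain ⟨A, hA1, hA2⟩ := Finset.exists_subset_card_eq hω
    have hAmem : A ∈ S.powersetCard l :=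
      Finset.mem_powersetCard.mpr ⟨hA1.trans (Finset.filter_subset _ _), hA2⟩
    refine Set.mem_biUnion hAmem ?_
    simp only [Set.mem_iInter]
    intro w hw
    exact (Finset.mem_filter.mp (hA1 hw)).2
  refine (measure_mono hsub).trans ((measure_biUnion_finset_le _ _).trans ?_)
  have heach : ∀ A ∈ S.powersetCard l,
      P (⋂ w ∈ A, {ω | p w ω = true}) = q ^ l := by
    intro A hA
    rw [Finset.mem_powersetCard] at hA
    have hpre : (⋂ w ∈ A, {ω | p w ω = true}) = ⋂ w ∈ A, p w ⁻¹' {true} := by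
      simp only [Set.preimage, Set.mem_singleton_iff]
    rw [hpre, hindep.measure_inter_preimage_eq_mul A
        (sets := fun _ => ({true} : Set Bool)) (fun i _ => measurableSet_singleton true)]
    rw [Finset.prod_congr rfl (fun w hw => ?_), Finset.prod_const, hA.2]
    have hw' := hS w (hA.1 hw)
    have hb := hbern w
    rw [show p w ⁻¹' {true} = {ω | p w ω = true} by ext ω; simp, hb, hw', hq]
  rw [Finset.sum_congr rfl heach, Finset.sum_const, Finset.card_powersetCard, nsmul_eq_mul]

lemma aux_real_bound {n l : ℕ} {M q : ℝ} (hl : 1 ≤ l) (hq : 0 < q)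
    (hnq : (n:ℝ) * q ≤ M) (hM : 0 ≤ M)
    (hhalf : Real.exp 1 * M / l ≤ 1/2) :
    (n.choose l : ℝ) * q ^ l ≤ (1/2 : ℝ) ^ l := by
  have hl0 : (0:ℝ) < l := by exact_mod_cast hl
  have hfac0 : (0:ℝ) < l.factorial := by exact_mod_cast l.factorial_pos
  have hc : (n.choose l : ℝ) ≤ (n:ℝ)^l / l.factorial := by
    have := Nat.choose_le_pow_div (α := ℝ) l n
    push_cast at this
    exact this
  have h1 : (n.choose l : ℝ) * q ^ l ≤ ((n:ℝ) * q)^l / l.factorial := by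
    calc (n.choose l : ℝ) * q ^ l ≤ ((n:ℝ)^l / l.factorial) * q ^ l :=
          mul_le_mul_of_nonneg_right hc (pow_nonneg hq.le l)
      _ = ((n:ℝ) * q)^l / l.factorial := by rw [mul_pow]; ring
  have h2 : ((n:ℝ) * q)^l ≤ M^l := pow_le_pow_left₀ (by positivity) hnq l
  have hfact : (l:ℝ)^l ≤ l.factorial * Real.exp 1 ^ l := by
    have hs := Real.sum_le_exp_of_nonneg (le_of_lt hl0) (l+1)
    have hterm : (l:ℝ)^l / l.factorial ≤ Real.exp l :=
      le_trans (Finset.single_le_sum (f := fun i => (l:ℝ)^i / i.factorial)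
        (fun i _ => by positivity) (Finset.self_mem_range_succ l)) hs
    have hexp : Real.exp (l:ℝ) = Real.exp 1 ^ l := by
      rw [← Real.exp_nat_mul, mul_one]
    rw [hexp, div_le_iff₀ hfac0] at hterm
    linarith
  have h3 : M^l / l.factorial ≤ (Real.exp 1 * M / l)^l := by
    rw [div_pow, mul_pow, div_le_div_iff₀ hfac0 (by positivity)]
    calc M^l * (l:ℝ)^l ≤ M^l * (l.factorial * Real.exp 1 ^ l) :=
          mul_le_mul_of_nonneg_left hfact (by positivity)
      _ = Real.exp 1 ^ l * M ^ l * l.factorial := by ring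
  have h4 : (Real.exp 1 * M / l)^l ≤ (1/2 : ℝ)^l :=
    pow_le_pow_left₀ (by positivity) hhalf l
  calc (n.choose l : ℝ) * q ^ l ≤ ((n:ℝ) * q)^l / l.factorial := h1
    _ ≤ M^l / l.factorial := by gcongr
    _ ≤ (Real.exp 1 * M / l)^l := h3
    _ ≤ (1/2 : ℝ)^l := h4

/-- Weak redundancy: if `T_j(W)` are sets of extensions of `W` of length `j` with
`#T_j(W) ≤ 2^{d(1-η)j} 2^{dε²j+d}`, and each word of length `j` survives independently
with probability `2^{-d(1-η)j}`, then a.s. for all large `j` and all `W` of length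
`⌊η'j⌋`, at most `2^{εη'j}` elements of `T_j(W)` survive. -/
theorem statement13 (d : ℕ) (hd : 1 ≤ d)
    (η η' ε : ℝ) (hη : η ∈ Set.Ioo (0:ℝ) 1) (hη' : η' ∈ Set.Ioc (0:ℝ) η)
    (hε0 : 0 < ε) (hε : ε ≤ η' / (4 * d))
    {Ω : Type*} [MeasurableSpace Ω] (P : Measure Ω) [IsProbabilityMeasure P]
    (p : List (Fin d → Bool) → Ω → Bool)
    (hmeas : ∀ w, Measurable (p w))
    (hindep : iIndepFun p P)
    (hbern : ∀ w : List (Fin d → Bool),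
      P {ω | p w ω = true} = ENNReal.ofReal ((2:ℝ) ^ (-(d:ℝ) * (1 - η) * (w.length : ℝ))))
    (T : ℕ → List (Fin d → Bool) → Finset (List (Fin d → Bool)))
    (hT1 : ∀ j W w, w ∈ T j W → W <+: w ∧ w.length = j)
    (hT2 : ∀ j W, ((T j W).card : ℝ)
      ≤ (2:ℝ) ^ ((d:ℝ) * (1 - η) * (j:ℝ)) * (2:ℝ) ^ ((d:ℝ) * ε^2 * (j:ℝ) + (d:ℝ))) :
    ∀ᵐ ω ∂P, ∀ᶠ j : ℕ in atTop, ∀ W : List (Fin d → Bool),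
      W.length = ⌊η' * (j:ℝ)⌋₊ →
      ((((T j W).filter (fun w => p w ω = true)).card : ℝ))
        ≤ (2:ℝ) ^ (ε * η' * (j:ℝ)) := by
  classical
  obtain ⟨hη0, hη1⟩ := hη
  obtain ⟨hη'0, hη'η⟩ := hη'
  have hd0 : (0:ℝ) < (d:ℝ) := by exact_mod_cast Nat.pos_of_ne_zero (by omega)
  set l : ℕ → ℕ := fun j => ⌊(2:ℝ) ^ (ε * η' * (j:ℝ))⌋₊ + 1 with hl
  have hl_ge : ∀ j : ℕ, (2:ℝ) ^ (ε * η' * (j:ℝ)) ≤ (l j : ℝ) := by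
    intro j
    have h := Nat.lt_floor_add_one ((2:ℝ) ^ (ε * η' * (j:ℝ)))
    have : (l j : ℝ) = (⌊(2:ℝ) ^ (ε * η' * (j:ℝ))⌋₊ : ℝ) + 1 := by
      rw [hl]; push_cast; ring
    rw [this]
    linarith
  have hl_pos : ∀ j, 1 ≤ l j := fun j => Nat.le_add_left 1 _
  -- arithmetic on exponents
  have hcε : (d:ℝ) * ε ≤ η' / 4 := by
    calc (d:ℝ) * ε ≤ (d:ℝ) * (η' / (4 * (d:ℝ))) := by gcongr
      _ = η' / 4 := by field_simp
  have hexp_neg : (d:ℝ) * ε ^ 2 - ε * η' < 0 := by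
    nlinarith [mul_le_mul_of_nonneg_left hcε hε0.le, mul_pos hε0 hη'0]
  -- eventual fact 1
  have hF1 : ∀ᶠ j : ℕ in atTop,
      Real.exp 1 * ((2:ℝ) ^ ((d:ℝ) * ε^2 * (j:ℝ) + (d:ℝ))) / (l j : ℝ) ≤ 1/2 := by
    set r1 : ℝ := (2:ℝ) ^ ((d:ℝ) * ε ^ 2 - ε * η') with hr1
    have hr1pos : 0 < r1 := Real.rpow_pos_of_pos two_pos _
    have hr1lt : r1 < 1 := Real.rpow_lt_one_of_one_lt_of_neg one_lt_two hexp_neg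
    have htend : Tendsto (fun j : ℕ => (Real.exp 1 * (2:ℝ)^(d:ℝ)) * r1 ^ j) atTop (nhds 0) := by
      simpa using (tendsto_pow_atTop_nhds_zero_of_lt_one hr1pos.le hr1lt).const_mul
        (Real.exp 1 * (2:ℝ)^(d:ℝ))
    filter_upwards [htend.eventually_le_const (by norm_num : (0:ℝ) < 1/2)] with j hj
    have hz : (0:ℝ) < (2:ℝ) ^ (ε * η' * (j:ℝ)) := Real.rpow_pos_of_pos two_pos _
    have hkey : Real.exp 1 * ((2:ℝ) ^ ((d:ℝ) * ε^2 * (j:ℝ) + (d:ℝ))) / (l j : ℝ)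
        ≤ Real.exp 1 * ((2:ℝ) ^ ((d:ℝ) * ε^2 * (j:ℝ) + (d:ℝ))) / ((2:ℝ) ^ (ε * η' * (j:ℝ))) :=
      div_le_div_of_nonneg_left (by positivity) hz (hl_ge j)
    refine hkey.trans ?_
    have heq2 : (2:ℝ)^((d:ℝ)*ε^2*(j:ℝ) + (d:ℝ)) / (2:ℝ)^(ε*η'*(j:ℝ)) = (2:ℝ)^(d:ℝ) * r1^j := by
      rw [hr1, ← Real.rpow_natCast ((2:ℝ)^((d:ℝ)*ε^2 - ε*η')) j,
        ← Real.rpow_mul (by norm_num : (0:ℝ) ≤ 2), ← Real.rpow_add two_pos,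
        ← Real.rpow_sub two_pos]
      congr 1
      ring
    calc Real.exp 1 * ((2:ℝ) ^ ((d:ℝ) * ε^2 * (j:ℝ) + (d:ℝ))) / ((2:ℝ) ^ (ε * η' * (j:ℝ)))
        = Real.exp 1 * ((2:ℝ)^((d:ℝ)*ε^2*(j:ℝ) + (d:ℝ)) / (2:ℝ)^(ε*η'*(j:ℝ))) := by ring
      _ = (Real.exp 1 * (2:ℝ)^(d:ℝ)) * r1^j := by rw [heq2]; ring
      _ ≤ 1/2 := hj
  -- eventual fact 2
  have hρpos : (0:ℝ) < (2:ℝ)^(ε*η') := Real.rpow_pos_of_pos two_pos _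
  have hρ1 : 1 < (2:ℝ)^(ε*η') := by
    have h := Real.rpow_lt_rpow_of_exponent_lt one_lt_two (show (0:ℝ) < ε*η' by positivity)
    simpa using h
  have hF2 : ∀ᶠ j : ℕ in atTop, ((d:ℝ) * η' + 1) * (j:ℝ) ≤ (l j : ℝ) := by
    have hinv : ((2:ℝ)^(ε*η'))⁻¹ < 1 := inv_lt_one_of_one_lt₀ hρ1
    have htend : Tendsto (fun j : ℕ => ((d:ℝ)*η'+1) * ((j:ℝ) * (((2:ℝ)^(ε*η'))⁻¹) ^ j))
        atTop (nhds 0) := by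
      simpa using (tendsto_self_mul_const_pow_of_lt_one (inv_nonneg.mpr hρpos.le)
        hinv).const_mul ((d:ℝ)*η'+1)
    filter_upwards [htend.eventually_le_const (by norm_num : (0:ℝ) < 1)] with j hj
    have hρj : (0:ℝ) < ((2:ℝ)^(ε*η'))^j := pow_pos hρpos j
    have hcancel : (((2:ℝ)^(ε*η'))⁻¹)^j * ((2:ℝ)^(ε*η'))^j = 1 := by
      rw [← mul_pow, inv_mul_cancel₀ hρpos.ne', one_pow]
    have h1 : ((d:ℝ)*η'+1) * (j:ℝ) ≤ ((2:ℝ)^(ε*η'))^j := by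
      calc ((d:ℝ)*η'+1) * (j:ℝ)
          = (((d:ℝ)*η'+1) * ((j:ℝ) * (((2:ℝ)^(ε*η'))⁻¹)^j)) * ((2:ℝ)^(ε*η'))^j := by
            rw [mul_assoc, mul_assoc, hcancel]; ring
        _ ≤ 1 * ((2:ℝ)^(ε*η'))^j := mul_le_mul_of_nonneg_right hj hρj.le
        _ = ((2:ℝ)^(ε*η'))^j := one_mul _
    refine h1.trans ?_
    have heq : ((2:ℝ)^(ε*η'))^j = (2:ℝ)^(ε*η'*(j:ℝ)) := by
      rw [← Real.rpow_natCast ((2:ℝ)^(ε*η')) j, ← Real.rpow_mul (by norm_num : (0:ℝ) ≤ 2)]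
    rw [heq]
    exact hl_ge j
  obtain ⟨J, hJ⟩ := eventually_atTop.mp (hF1.and hF2)
  set bad : ℕ → Set Ω := fun j =>
    {ω | ∃ W : List (Fin d → Bool), W.length = ⌊η' * (j:ℝ)⌋₊ ∧
      l j ≤ ((T j W).filter (fun w => p w ω = true)).card} with hbad
  have main : ∀ j, J ≤ j → P (bad j) ≤ ENNReal.ofReal ((2:ℝ) ^ (-(j:ℝ))) := by
    intro j hj
    obtain ⟨h1j, h2j⟩ := hJ j hj
    have perW : ∀ W : List (Fin d → Bool),
        P {ω | l j ≤ ((T j W).filter (fun w => p w ω = true)).card}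
          ≤ ENNReal.ofReal ((1/2 : ℝ) ^ (l j)) := by
      intro W
      have hkey := aux_prob_bound P p hindep hbern j (l j) (T j W)
        (fun w hw => (hT1 j W w hw).2)
      refine hkey.trans ?_
      have hq0 : (0:ℝ) ≤ (2:ℝ) ^ (-(d:ℝ) * (1 - η) * (j:ℝ)) :=
        (Real.rpow_pos_of_pos two_pos _).le
      rw [← ENNReal.ofReal_pow hq0, ← ENNReal.ofReal_natCast,
        ← ENNReal.ofReal_mul (by positivity)]
      refine ENNReal.ofReal_le_ofReal ?_
      refine aux_real_bound (hl_pos j) (Real.rpow_pos_of_pos two_pos _) ?_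
        (Real.rpow_pos_of_pos two_pos _).le h1j
      calc ((T j W).card : ℝ) * (2:ℝ)^(-(d:ℝ)*(1-η)*(j:ℝ))
          ≤ ((2:ℝ)^((d:ℝ)*(1-η)*(j:ℝ)) * (2:ℝ)^((d:ℝ)*ε^2*(j:ℝ)+(d:ℝ)))
              * (2:ℝ)^(-(d:ℝ)*(1-η)*(j:ℝ)) :=
            mul_le_mul_of_nonneg_right (hT2 j W) hq0
        _ = (2:ℝ)^((d:ℝ)*ε^2*(j:ℝ)+(d:ℝ)) := by
            rw [← Real.rpow_add two_pos, ← Real.rpow_add two_pos]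
            congr 1
            ring
    have hsub : bad j ⊆ ⋃ f ∈ (Finset.univ : Finset (Fin ⌊η' * (j:ℝ)⌋₊ → (Fin d → Bool))),
        {ω | l j ≤ ((T j (List.ofFn f)).filter (fun w => p w ω = true)).card} := by
      rintro ω ⟨W, hW, hcard⟩
      have hfn : List.ofFn (fun i : Fin ⌊η' * (j:ℝ)⌋₊ => W.get (Fin.cast hW.symm i)) = W := by
        apply List.ext_getElem
        · simp [hW]
        · intro i h1 h2
          simp
      refine Set.mem_biUnion (Finset.mem_univ (fun i : Fin ⌊η' * (j:ℝ)⌋₊ =>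
        W.get (Fin.cast hW.symm i))) ?_
      show l j ≤ _
      rw [hfn]
      exact hcard
    refine (measure_mono hsub).trans ((measure_biUnion_finset_le _ _).trans ?_)
    have hsum := Finset.sum_le_sum (fun f (_ : f ∈ (Finset.univ :
        Finset (Fin ⌊η' * (j:ℝ)⌋₊ → (Fin d → Bool)))) => perW (List.ofFn f))
    refine hsum.trans ?_
    rw [Finset.sum_const, nsmul_eq_mul, Finset.card_univ, ← ENNReal.ofReal_natCast,
      ← ENNReal.ofReal_mul (by positivity)]
    refine ENNReal.ofReal_le_ofReal ?_
    -- real counting estimate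
    have hcardN : Fintype.card (Fin ⌊η' * (j:ℝ)⌋₊ → (Fin d → Bool))
        = 2 ^ (d * ⌊η' * (j:ℝ)⌋₊) := by
      simp [Fintype.card_fun, pow_mul]
    have hcard : (Fintype.card (Fin ⌊η' * (j:ℝ)⌋₊ → (Fin d → Bool)) : ℝ)
        = (2:ℝ) ^ ((d * ⌊η' * (j:ℝ)⌋₊ : ℕ)) := by
      rw [hcardN]; push_cast; ring
    rw [hcard]
    have e1 : (2:ℝ) ^ ((d * ⌊η' * (j:ℝ)⌋₊ : ℕ)) = (2:ℝ) ^ (((d * ⌊η' * (j:ℝ)⌋₊ : ℕ) : ℝ)) :=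
      (Real.rpow_natCast 2 _).symm
    have e2 : ((1:ℝ)/2) ^ (l j) = (2:ℝ) ^ (-(l j : ℝ)) := by
      rw [Real.rpow_neg (by norm_num : (0:ℝ) ≤ 2), Real.rpow_natCast, ← inv_pow, one_div]
    rw [e1, e2, ← Real.rpow_add two_pos]
    refine Real.rpow_le_rpow_of_exponent_le one_le_two ?_
    have hm : ((⌊η' * (j:ℝ)⌋₊ : ℝ)) ≤ η' * j := Nat.floor_le (by positivity)
    have : (j:ℝ) + (d:ℝ) * (⌊η' * (j:ℝ)⌋₊ : ℝ) ≤ ((d:ℝ) * η' + 1) * (j:ℝ) := by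
      nlinarith [mul_le_mul_of_nonneg_left hm hd0.le]
    have hlc : ((l j : ℕ) : ℝ) = (⌊(2:ℝ)^(ε*η'*(j:ℝ))⌋₊ : ℝ) + 1 := by
      rw [hl]; push_cast; ring
    push_cast
    linarith [h2j, hlc]
  -- Borel-Cantelli
  set s : ℕ → Set Ω := fun j => if J ≤ j then bad j else ∅ with hs
  have hofr : ∀ j : ℕ, ENNReal.ofReal ((2:ℝ) ^ (-(j:ℝ))) = (2⁻¹ : ℝ≥0∞) ^ j := by
    intro j
    have e2 : (2:ℝ) ^ (-(j:ℝ)) = ((2:ℝ)⁻¹) ^ j := by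
      rw [Real.rpow_neg (by norm_num : (0:ℝ) ≤ 2), Real.rpow_natCast, ← inv_pow]
    rw [e2, ENNReal.ofReal_pow (by norm_num), ENNReal.ofReal_inv_of_pos two_pos,
      ENNReal.ofReal_ofNat]
  have hsum : ∑' j, P (s j) ≠ ⊤ := by
    have hle : ∀ j, P (s j) ≤ (2⁻¹ : ℝ≥0∞) ^ j := by
      intro j
      by_cases h : J ≤ j
      · rw [hs]
        simp only [if_pos h]
        exact (main j h).trans (hofr j).le
      · simp [hs, if_neg h]
    refine ne_top_of_le_ne_top ?_ (ENNReal.tsum_le_tsum hle)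
    rw [ENNReal.tsum_geometric, ENNReal.one_sub_inv_two]
    simp
  have hlim := measure_limsup_atTop_eq_zero hsum
  filter_upwards [measure_eq_zero_iff_ae_notMem.mp hlim] with ω hω
  have h' : ∀ᶠ j in atTop, ω ∉ s j :=
    Filter.not_frequently.mp (fun h => hω (mem_limsup_iff_frequently_mem.mpr h))
  filter_upwards [h', eventually_ge_atTop J] with j hj1 hj2
  intro W hW
  by_contra hcon
  push_neg at hcon
  apply hj1
  rw [hs]
  simp only [if_pos hj2]
  refine ⟨W, hW, ?_⟩
  have : ⌊(2:ℝ) ^ (ε * η' * (j:ℝ))⌋₊ < ((T j W).filter (fun w => p w ω = true)).card :=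
    (Nat.floor_lt (Real.rpow_pos_of_pos two_pos _).le).mpr hcon
  have hlj : l j = ⌊(2:ℝ) ^ (ε * η' * (j:ℝ))⌋₊ + 1 := by rw [hl]
  omega
end

section
/- Fix $d\ge1$, $\eta\in(0,1)$, $q>0$ and a quasi-Bernoulli capacity $\mu$ with lower $L^q$-spectrum $\tau_\mu$ satisfying $\tau_\mu(q)+d(1-\eta)>0$. Let $(p_w)$ be independent Bernoulli with parameter $2^{-d(1-\eta)|w|}$ and define $M(I_W)=\max\{\mu(I_{Wv}): v\in\Sigma^*, p_{Wv}=1\}$ (assumed well-defined). Then there is a constant $C'_q$ such that for all $J$, $\mathbb{E}\big(\sum_{W\in\Sigma_J} M(I_W)^q\big)\le C'_q\, 2^{-Jd(1-\eta)}\sum_{W\in\Sigma_J}\mu(I_W)^q$. Consequently, almost surely $\liminf_{J\to\infty}-\tfrac1J\log_2\sum_{W\in\Sigma_J}M(I_W)^q\ge \tau_\mu(q)+d(1-\eta)$. -/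
open MeasureTheory ProbabilityTheory Filter

private lemma aux_ofFn_exists {α : Type*} (l : List α) {J : ℕ} (h : l.length = J) :
    ∃ f : Fin J → α, List.ofFn f = l := by
  subst h; exact ⟨l.get, List.ofFn_get l⟩

private lemma aux_sSup_rpow_le {S : Set ℝ} {q : ℝ} (hq : 0 < q) (hne : S.Nonempty)
    (hSpos : ∀ x ∈ S, 0 < x) {R : ENNReal}
    (h : ∀ x ∈ S, ENNReal.ofReal (x ^ q) ≤ R) : ENNReal.ofReal (sSup S ^ q) ≤ R := by
  rcases eq_or_ne R ⊤ with hR | hR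
  · simp [hR]
  · have hub : ∀ x ∈ S, x ≤ R.toReal ^ q⁻¹ := by
      intro x hx
      have h1 : x ^ q ≤ R.toReal := (ENNReal.ofReal_le_iff_le_toReal hR).1 (h x hx)
      have h2 : (x ^ q) ^ q⁻¹ ≤ R.toReal ^ q⁻¹ :=
        Real.rpow_le_rpow (Real.rpow_nonneg (hSpos x hx).le q) h1 (inv_nonneg.2 hq.le)
      rwa [Real.rpow_rpow_inv (hSpos x hx).le hq.ne'] at h2
    have hbdd : BddAbove S := ⟨R.toReal ^ q⁻¹, fun x hx => hub x hx⟩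
    have hsup : sSup S ≤ R.toReal ^ q⁻¹ := csSup_le hne hub
    obtain ⟨x0, hx0⟩ := hne
    have hsup0 : 0 ≤ sSup S := le_trans (hSpos x0 hx0).le (le_csSup hbdd hx0)
    have hfin : sSup S ^ q ≤ (R.toReal ^ q⁻¹) ^ q :=
      Real.rpow_le_rpow hsup0 hsup hq.le
    rw [Real.rpow_inv_rpow ENNReal.toReal_nonneg hq.ne'] at hfin
    exact ENNReal.ofReal_le_of_le_toReal hfin

private lemma aux_summable_of_eventually_le_geometric {g : ℕ → ℝ} (h0 : ∀ k, 0 ≤ g k)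
    {r : ℝ} (hr0 : 0 ≤ r) (hr1 : r < 1) (h : ∀ᶠ k in atTop, g k ≤ r ^ k) : Summable g := by
  obtain ⟨N, hN⟩ := eventually_atTop.1 h
  rw [← summable_nat_add_iff N]
  refine Summable.of_nonneg_of_le (fun k => h0 _) (fun k => ?_)
    (((summable_geometric_of_lt_one hr0 hr1).mul_right (r ^ N)))
  calc g (k + N) ≤ r ^ (k + N) := hN _ (Nat.le_add_left N k)
    _ = r ^ k * r ^ N := pow_add r k N

private lemma aux_tsum_list {α : Type*} [Fintype α] (F : List α → ENNReal) :
    ∑' v : List α, F v = ∑' n : ℕ, ∑ f : Fin n → α, F (List.ofFn f) := by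
  rw [← (List.equivSigmaTuple (α := α)).symm.tsum_eq F]
  rw [ENNReal.tsum_sigma']
  congr 1
  ext n
  rw [tsum_fintype]
  rfl

set_option maxHeartbeats 1600000 in
/-- For a quasi-Bernoulli capacity `μ` and `q > 0` with `τ_μ(q) + d(1-η) > 0`, the
sampled capacity `M(I_W) = max{μ(I_{Wv}) : p_{Wv} = 1}` satisfies
`𝔼[∑_{W ∈ Σ_J} M(I_W)^q] ≤ C'_q 2^{-Jd(1-η)} ∑_{W ∈ Σ_J} μ(I_W)^q`, and consequently
a.s. `liminf_J -(1/J) log₂ ∑_W M(I_W)^q ≥ τ_μ(q) + d(1-η)`. -/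
theorem statement18 (d : ℕ) (hd : 1 ≤ d) (η q : ℝ) (hη : η ∈ Set.Ioo (0:ℝ) 1)
    (hq : 0 < q)
    {Ω : Type*} [MeasurableSpace Ω] (P : Measure Ω) [IsProbabilityMeasure P]
    (μ : List (Fin d → Bool) → ℝ) (C : ℝ) (hC : 1 ≤ C)
    (hpos : ∀ w, 0 < μ w)
    (hcap : ∀ w v : List (Fin d → Bool), μ (w ++ v) ≤ μ w)
    (hqb : ∀ w v : List (Fin d → Bool),
      C⁻¹ * (μ w * μ v) ≤ μ (w ++ v) ∧ μ (w ++ v) ≤ C * (μ w * μ v))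
    (τq : ℝ)
    (hτ : (τq : EReal) = Filter.liminf (fun J : ℕ =>
      ((-(1/(J:ℝ)) * Real.logb 2
        (∑ f : Fin J → (Fin d → Bool), μ (List.ofFn f) ^ q) : ℝ) : EReal)) Filter.atTop)
    (hτpos : 0 < τq + (d:ℝ) * (1 - η))
    (p : List (Fin d → Bool) → Ω → Bool)
    (hmeas : ∀ w, Measurable (p w))
    (hindep : iIndepFun p P)
    (hbern : ∀ w : List (Fin d → Bool),
      P {ω | p w ω = true} = ENNReal.ofReal ((2:ℝ) ^ (-(d:ℝ) * (1 - η) * (w.length : ℝ))))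
    (M : List (Fin d → Bool) → Ω → ℝ)
    (hM : ∀ W ω, M W ω
      = sSup {x : ℝ | ∃ v : List (Fin d → Bool), p (W ++ v) ω = true ∧ x = μ (W ++ v)}) :
    (∃ C' : ℝ, 0 < C' ∧ ∀ J : ℕ,
      ∫⁻ ω, ENNReal.ofReal
          (∑ f : Fin J → (Fin d → Bool), M (List.ofFn f) ω ^ q) ∂P
        ≤ ENNReal.ofReal (C' * (2:ℝ) ^ (-(J:ℝ) * (d:ℝ) * (1 - η))
            * ∑ f : Fin J → (Fin d → Bool), μ (List.ofFn f) ^ q)) ∧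
    (∀ᵐ ω ∂P, ((τq + (d:ℝ) * (1 - η) : ℝ) : EReal)
      ≤ Filter.liminf (fun J : ℕ =>
          ((-(1/(J:ℝ)) * Real.logb 2
            (∑ f : Fin J → (Fin d → Bool), M (List.ofFn f) ω ^ q) : ℝ) : EReal))
          Filter.atTop) := by
  classical
  obtain ⟨hη0, hη1⟩ := hη
  have h1η : 0 < 1 - η := by linarith
  have hdpos : (0:ℝ) < d := by exact_mod_cast hd
  set b : ℝ := (d:ℝ) * (1 - η) with hbdef
  have hb : 0 < b := mul_pos hdpos h1η
  set S : ℕ → ℝ := fun k => ∑ f : Fin k → (Fin d → Bool), μ (List.ofFn f) ^ q with hSdef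
  have hSpos : ∀ k, 0 < S k := fun k =>
    Finset.sum_pos (fun f _ => Real.rpow_pos_of_pos (hpos _) q) Finset.univ_nonempty
  -- eventual bound on S from the liminf hypothesis
  have hSgen : ∀ ε : ℝ, 0 < ε → ∀ᶠ k : ℕ in atTop, S k ≤ (2:ℝ) ^ (-(k:ℝ) * (τq - ε)) := by
    intro ε hε
    have hlt : ((τq - ε : ℝ) : EReal) < Filter.liminf (fun J : ℕ =>
        ((-(1/(J:ℝ)) * Real.logb 2 (S J) : ℝ) : EReal)) Filter.atTop := by
      rw [← hτ]
      exact_mod_cast (by linarith : τq - ε < τq)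
    have hev := eventually_lt_of_lt_liminf hlt
    filter_upwards [hev, eventually_ge_atTop 1] with k hk hk1
    have hk0 : (0:ℝ) < k := by exact_mod_cast hk1
    have hk2 : τq - ε < -(1/(k:ℝ)) * Real.logb 2 (S k) := by exact_mod_cast hk
    have h3 : (k:ℝ) * (τq - ε) < (k:ℝ) * (-(1/(k:ℝ)) * Real.logb 2 (S k)) :=
      mul_lt_mul_of_pos_left hk2 hk0
    rw [show (k:ℝ) * (-(1/(k:ℝ)) * Real.logb 2 (S k)) = -Real.logb 2 (S k) by
      field_simp] at h3
    have h4 : Real.logb 2 (S k) < -(k:ℝ) * (τq - ε) := by linarith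
    exact ((Real.logb_lt_iff_lt_rpow one_lt_two (hSpos k)).1 h4).le
  set g : ℕ → ℝ := fun k => (2:ℝ) ^ (-(k:ℝ) * b) * S k with hgdef
  have hg0 : ∀ k, 0 ≤ g k := fun k =>
    mul_nonneg (Real.rpow_nonneg (by norm_num) _) (hSpos k).le
  have ha : 0 < τq + b := hτpos
  have hgsum : Summable g := by
    set t : ℝ := τq - (τq + b)/2 with htdef
    have htb : t + b = (τq + b)/2 := by rw [htdef]; ring
    have htbpos : 0 < t + b := by rw [htb]; linarith
    apply aux_summable_of_eventually_le_geometric hg0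
      (r := (2:ℝ) ^ (-(t + b))) (Real.rpow_nonneg (by norm_num) _)
      (Real.rpow_lt_one_of_one_lt_of_neg one_lt_two (by linarith))
    filter_upwards [hSgen ((τq + b)/2) (by linarith)] with k hk
    have h1 : g k ≤ (2:ℝ) ^ (-(k:ℝ) * b) * (2:ℝ) ^ (-(k:ℝ) * t) := by
      exact mul_le_mul_of_nonneg_left hk (Real.rpow_nonneg (by norm_num) _)
    calc g k ≤ (2:ℝ) ^ (-(k:ℝ) * b) * (2:ℝ) ^ (-(k:ℝ) * t) := h1
      _ = (2:ℝ) ^ (-(t + b) * (k:ℝ)) := by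
          rw [← Real.rpow_add two_pos]; congr 1; ring
      _ = ((2:ℝ) ^ (-(t + b))) ^ k := by
          rw [← Real.rpow_natCast ((2:ℝ) ^ (-(t + b))) k, ← Real.rpow_mul (by norm_num)]
  set K : ℝ := ∑' k, g k with hKdef
  have hK0 : 0 < K := by
    have h1 : g 0 ≤ K := Summable.le_tsum hgsum 0 (fun i _ => hg0 i)
    have h2 : 0 < g 0 := mul_pos (Real.rpow_pos_of_pos two_pos _) (hSpos 0)
    linarith
  have hrp2 : ∀ x : ℝ, 0 ≤ (2:ℝ) ^ x := fun x => Real.rpow_nonneg (by norm_num) x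
  have hμq : ∀ w, 0 ≤ μ w ^ q := fun w => (Real.rpow_pos_of_pos (hpos w) q).le
  have hCq : (0:ℝ) ≤ C ^ q := (Real.rpow_pos_of_pos (lt_of_lt_of_le one_pos hC) q).le
  -- the measurable majorant G
  have hmeasset : ∀ w : List (Fin d → Bool), MeasurableSet {ω | p w ω = true} := by
    intro w
    exact (hmeas w) (measurableSet_singleton true)
  set G : List (Fin d → Bool) → Ω → ENNReal := fun W ω =>
    ∑' v : List (Fin d → Bool), Set.indicator {ω' | p (W ++ v) ω' = true}
      (fun _ => ENNReal.ofReal (μ (W ++ v) ^ q)) ω with hGdef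
  have hGmeas : ∀ W, Measurable (G W) := by
    intro W
    exact Measurable.ennreal_tsum
      (fun v => Measurable.indicator measurable_const (hmeasset (W ++ v)))
  have hMnonneg : ∀ W ω, 0 ≤ M W ω := by
    intro W ω
    rw [hM]
    rcases Set.eq_empty_or_nonempty
      {x : ℝ | ∃ v : List (Fin d → Bool), p (W ++ v) ω = true ∧ x = μ (W ++ v)} with he | hne
    · rw [he, Real.sSup_empty]
    · have hbdd : BddAbove
          {x : ℝ | ∃ v : List (Fin d → Bool), p (W ++ v) ω = true ∧ x = μ (W ++ v)} := by
        refine ⟨μ W, ?_⟩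
        rintro y ⟨u, hu, rfl⟩
        exact hcap W u
      obtain ⟨x, hx⟩ := hne
      obtain ⟨v, hv, hxv⟩ := hx
      refine le_trans ?_ (le_csSup hbdd ⟨v, hv, hxv⟩)
      rw [hxv]; exact (hpos _).le
  have hGmono : ∀ W ω, ENNReal.ofReal (M W ω ^ q) ≤ G W ω := by
    intro W ω
    rw [hM]
    rcases Set.eq_empty_or_nonempty
      {x : ℝ | ∃ v : List (Fin d → Bool), p (W ++ v) ω = true ∧ x = μ (W ++ v)} with he | hne
    · rw [he, Real.sSup_empty, Real.zero_rpow hq.ne']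
      simp
    · apply aux_sSup_rpow_le hq hne
      · rintro x ⟨v, hv, rfl⟩; exact hpos _
      · rintro x ⟨v, hv, rfl⟩
        have hmem : ω ∈ {ω' | p (W ++ v) ω' = true} := hv
        have hind : Set.indicator {ω' | p (W ++ v) ω' = true}
            (fun _ => ENNReal.ofReal (μ (W ++ v) ^ q)) ω = ENNReal.ofReal (μ (W ++ v) ^ q) :=
          Set.indicator_of_mem hmem _
        rw [← hind]
        exact ENNReal.le_tsum v
  have hGint : ∀ W, ∫⁻ ω, G W ω ∂P
      = ∑' v : List (Fin d → Bool),
          ENNReal.ofReal (μ (W ++ v) ^ q) * P {ω | p (W ++ v) ω = true} := by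
    intro W
    rw [hGdef]
    rw [lintegral_tsum (fun v =>
      (Measurable.indicator measurable_const (hmeasset (W ++ v))).aemeasurable)]
    congr 1
    ext v
    rw [lintegral_indicator_const (hmeasset (W ++ v))]
  have hlist : ∑' v : List (Fin d → Bool),
      ENNReal.ofReal (μ v ^ q * (2:ℝ) ^ (-(v.length:ℝ) * b)) = ENNReal.ofReal K := by
    rw [aux_tsum_list (fun v => ENNReal.ofReal (μ v ^ q * (2:ℝ) ^ (-(v.length:ℝ) * b)))]
    rw [hKdef, ENNReal.ofReal_tsum_of_nonneg hg0 hgsum]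
    congr 1
    ext n
    rw [← ENNReal.ofReal_sum_of_nonneg (fun f _ => mul_nonneg (hμq _) (hrp2 _))]
    congr 1
    simp only [List.length_ofFn]
    rw [hgdef]
    simp only [hSdef]
    rw [Finset.mul_sum]
    exact Finset.sum_congr rfl (fun f _ => by ring)
  have hGle : ∀ (J : ℕ) (W : List (Fin d → Bool)), W.length = J →
      ∫⁻ ω, G W ω ∂P
        ≤ ENNReal.ofReal (C ^ q * μ W ^ q * (2:ℝ) ^ (-(J:ℝ) * b) * K) := by
    intro J W hW
    rw [hGint W]
    have hterm : ∀ v : List (Fin d → Bool),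
        ENNReal.ofReal (μ (W ++ v) ^ q) * P {ω | p (W ++ v) ω = true}
        ≤ ENNReal.ofReal (C ^ q * μ W ^ q * (2:ℝ) ^ (-(J:ℝ) * b))
            * ENNReal.ofReal (μ v ^ q * (2:ℝ) ^ (-(v.length:ℝ) * b)) := by
      intro v
      rw [hbern]
      have hμle : μ (W ++ v) ^ q ≤ C ^ q * (μ W ^ q * μ v ^ q) := by
        have h1 : μ (W ++ v) ≤ C * (μ W * μ v) := (hqb W v).2
        have h2 := Real.rpow_le_rpow (hpos (W ++ v)).le h1 hq.le
        rwa [Real.mul_rpow (by linarith) (mul_nonneg (hpos W).le (hpos v).le),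
          Real.mul_rpow (hpos W).le (hpos v).le] at h2
      have hexp : (2:ℝ) ^ (-(d:ℝ) * (1 - η) * (((W ++ v).length : ℕ) : ℝ))
          = (2:ℝ) ^ (-(J:ℝ) * b) * (2:ℝ) ^ (-(v.length:ℝ) * b) := by
        rw [← Real.rpow_add two_pos]
        congr 1
        rw [List.length_append, hW, hbdef]
        push_cast
        ring
      rw [hexp, ← ENNReal.ofReal_mul (hμq (W ++ v)), ← ENNReal.ofReal_mul (mul_nonneg (mul_nonneg hCq (hμq W)) (hrp2 _))]
      apply ENNReal.ofReal_le_ofReal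
      calc μ (W ++ v) ^ q * ((2:ℝ) ^ (-(J:ℝ) * b) * (2:ℝ) ^ (-(v.length:ℝ) * b))
          ≤ (C ^ q * (μ W ^ q * μ v ^ q))
            * ((2:ℝ) ^ (-(J:ℝ) * b) * (2:ℝ) ^ (-(v.length:ℝ) * b)) :=
            mul_le_mul_of_nonneg_right hμle (mul_nonneg (hrp2 _) (hrp2 _))
        _ = _ := by ring
    calc ∑' v : List (Fin d → Bool),
          ENNReal.ofReal (μ (W ++ v) ^ q) * P {ω | p (W ++ v) ω = true}
        ≤ ∑' v : List (Fin d → Bool),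
            ENNReal.ofReal (C ^ q * μ W ^ q * (2:ℝ) ^ (-(J:ℝ) * b))
              * ENNReal.ofReal (μ v ^ q * (2:ℝ) ^ (-(v.length:ℝ) * b)) :=
          ENNReal.tsum_le_tsum hterm
      _ = ENNReal.ofReal (C ^ q * μ W ^ q * (2:ℝ) ^ (-(J:ℝ) * b)) * ENNReal.ofReal K := by
          rw [ENNReal.tsum_mul_left, hlist]
      _ = ENNReal.ofReal (C ^ q * μ W ^ q * (2:ℝ) ^ (-(J:ℝ) * b) * K) :=
          (ENNReal.ofReal_mul (mul_nonneg (mul_nonneg hCq (hμq W)) (hrp2 _))).symm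
  set C' : ℝ := C ^ q * K with hC'def
  have hCpos : (0:ℝ) < C := lt_of_lt_of_le one_pos hC
  have hC'pos : 0 < C' := mul_pos (Real.rpow_pos_of_pos hCpos q) hK0
  have hGGmeas : ∀ J : ℕ,
      Measurable (fun ω => ∑ f : Fin J → (Fin d → Bool), G (List.ofFn f) ω) :=
    fun J => Finset.measurable_sum _ (fun f _ => hGmeas _)
  have hGGle : ∀ J : ℕ,
      ∫⁻ ω, (∑ f : Fin J → (Fin d → Bool), G (List.ofFn f) ω) ∂P
        ≤ ENNReal.ofReal (C' * (2:ℝ) ^ (-(J:ℝ) * b) * S J) := by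
    intro J
    calc ∫⁻ ω, (∑ f : Fin J → (Fin d → Bool), G (List.ofFn f) ω) ∂P
        = ∑ f : Fin J → (Fin d → Bool), ∫⁻ ω, G (List.ofFn f) ω ∂P :=
          lintegral_finset_sum _ (fun f _ => hGmeas _)
      _ ≤ ∑ f : Fin J → (Fin d → Bool),
            ENNReal.ofReal (C ^ q * μ (List.ofFn f) ^ q * (2:ℝ) ^ (-(J:ℝ) * b) * K) :=
          Finset.sum_le_sum (fun f _ => hGle J _ (List.length_ofFn (f := f)))
      _ = ENNReal.ofReal (∑ f : Fin J → (Fin d → Bool),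
            C ^ q * μ (List.ofFn f) ^ q * (2:ℝ) ^ (-(J:ℝ) * b) * K) :=
          (ENNReal.ofReal_sum_of_nonneg (fun f _ => mul_nonneg (mul_nonneg (mul_nonneg hCq (hμq _)) (hrp2 _)) hK0.le)).symm
      _ = ENNReal.ofReal (C' * (2:ℝ) ^ (-(J:ℝ) * b) * S J) := by
          congr 1
          rw [hC'def]
          simp only [hSdef]
          rw [Finset.mul_sum]
          exact (Finset.sum_congr rfl (fun f _ => by ring)).symm
  have hpt : ∀ (J : ℕ) (ω : Ω),
      ENNReal.ofReal (∑ f : Fin J → (Fin d → Bool), M (List.ofFn f) ω ^ q)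
        ≤ ∑ f : Fin J → (Fin d → Bool), G (List.ofFn f) ω := by
    intro J ω
    rw [ENNReal.ofReal_sum_of_nonneg (fun f _ => Real.rpow_nonneg (hMnonneg _ _) q)]
    exact Finset.sum_le_sum (fun f _ => hGmono _ ω)
  have hpart1 : ∀ J : ℕ,
      ∫⁻ ω, ENNReal.ofReal (∑ f : Fin J → (Fin d → Bool), M (List.ofFn f) ω ^ q) ∂P
        ≤ ENNReal.ofReal (C' * (2:ℝ) ^ (-(J:ℝ) * b) * S J) :=
    fun J => le_trans (lintegral_mono (hpt J)) (hGGle J)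
  constructor
  · refine ⟨C', hC'pos, fun J => ?_⟩
    have hexp : -(J:ℝ) * (d:ℝ) * (1 - η) = -(J:ℝ) * b := by rw [hbdef]; ring
    rw [hexp]
    exact hpart1 J
  · -- Part 2
    have hclaim : ∀ δ : ℝ, 0 < δ → ∀ᵐ ω ∂P, ∀ᶠ J in atTop,
        (∑ f : Fin J → (Fin d → Bool), M (List.ofFn f) ω ^ q)
          < (2:ℝ) ^ (-(J:ℝ) * (τq + b - δ)) := by
      intro δ hδ0
      set ρ : ENNReal := ENNReal.ofReal ((2:ℝ) ^ (-(δ/2))) with hρdef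
      have hρ1 : ρ < 1 := by
        rw [hρdef]
        exact ENNReal.ofReal_lt_one.2
          (Real.rpow_lt_one_of_one_lt_of_neg one_lt_two (by linarith))
      have hρtop : ρ ≠ ⊤ := by rw [hρdef]; exact ENNReal.ofReal_ne_top
      set E : ℕ → Set Ω := fun J => {ω | ENNReal.ofReal ((2:ℝ) ^ (-(J:ℝ) * (τq + b - δ)))
        ≤ ∑ f : Fin J → (Fin d → Bool), G (List.ofFn f) ω} with hEdef
      have hPE : ∀ᶠ J in atTop, P (E J) ≤ ENNReal.ofReal C' * ρ ^ J := by
        filter_upwards [hSgen (δ/2) (by linarith)] with J hSJ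
        have hc0 : (0:ℝ) < (2:ℝ) ^ (-(J:ℝ) * (τq + b - δ)) := Real.rpow_pos_of_pos two_pos _
        have hmark := meas_ge_le_lintegral_div (μ := P) ((hGGmeas J).aemeasurable)
          (ε := ENNReal.ofReal ((2:ℝ) ^ (-(J:ℝ) * (τq + b - δ))))
          (ENNReal.ofReal_pos.2 hc0).ne' ENNReal.ofReal_ne_top
        have hEb : ∫⁻ ω, (∑ f : Fin J → (Fin d → Bool), G (List.ofFn f) ω) ∂P
            ≤ ENNReal.ofReal (C' * (2:ℝ) ^ (-(J:ℝ) * (δ/2)))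
              * ENNReal.ofReal ((2:ℝ) ^ (-(J:ℝ) * (τq + b - δ))) := by
          refine le_trans (hGGle J) ?_
          rw [← ENNReal.ofReal_mul (mul_nonneg hC'pos.le (hrp2 _))]
          apply ENNReal.ofReal_le_ofReal
          calc C' * (2:ℝ) ^ (-(J:ℝ) * b) * S J
              ≤ C' * (2:ℝ) ^ (-(J:ℝ) * b) * (2:ℝ) ^ (-(J:ℝ) * (τq - δ/2)) :=
                mul_le_mul_of_nonneg_left hSJ (mul_nonneg hC'pos.le (hrp2 _))
            _ = C' * ((2:ℝ) ^ (-(J:ℝ) * b) * (2:ℝ) ^ (-(J:ℝ) * (τq - δ/2))) := by ring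
            _ = C' * ((2:ℝ) ^ (-(J:ℝ) * (δ/2)) * (2:ℝ) ^ (-(J:ℝ) * (τq + b - δ))) := by
                rw [← Real.rpow_add two_pos, ← Real.rpow_add two_pos]
                congr 1
                ring
            _ = C' * (2:ℝ) ^ (-(J:ℝ) * (δ/2)) * (2:ℝ) ^ (-(J:ℝ) * (τq + b - δ)) := by ring
        calc P (E J)
            ≤ (∫⁻ ω, (∑ f : Fin J → (Fin d → Bool), G (List.ofFn f) ω) ∂P)
                / ENNReal.ofReal ((2:ℝ) ^ (-(J:ℝ) * (τq + b - δ))) := hmark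
          _ ≤ (ENNReal.ofReal (C' * (2:ℝ) ^ (-(J:ℝ) * (δ/2)))
                * ENNReal.ofReal ((2:ℝ) ^ (-(J:ℝ) * (τq + b - δ))))
                / ENNReal.ofReal ((2:ℝ) ^ (-(J:ℝ) * (τq + b - δ))) :=
              ENNReal.div_le_div_right hEb _
          _ = ENNReal.ofReal (C' * (2:ℝ) ^ (-(J:ℝ) * (δ/2))) := by
              rw [mul_div_assoc, ENNReal.div_self (ENNReal.ofReal_pos.2 hc0).ne'
                ENNReal.ofReal_ne_top, mul_one]
          _ = ENNReal.ofReal C' * ρ ^ J := by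
              rw [hρdef, ← ENNReal.ofReal_pow (hrp2 _), ENNReal.ofReal_mul hC'pos.le]
              congr 2
              rw [← Real.rpow_natCast ((2:ℝ) ^ (-(δ/2))) J, ← Real.rpow_mul (by norm_num)]
              congr 1
              ring
      have hsum : ∑' J, P (E J) ≠ ⊤ := by
        obtain ⟨N, hN⟩ := eventually_atTop.1 hPE
        have hb1 : ∀ J : ℕ, P (E J)
            ≤ (if J < N then (1:ENNReal) else 0) + ENNReal.ofReal C' * ρ ^ J := by
          intro J
          by_cases hJN : J < N
          · simp only [hJN, if_true]
            exact le_trans prob_le_one le_self_add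
          · simp only [hJN, if_false]
            rw [zero_add]
            exact hN J (not_lt.1 hJN)
        refine ne_top_of_le_ne_top ?_ (ENNReal.tsum_le_tsum hb1)
        rw [ENNReal.tsum_add]
        refine ENNReal.add_ne_top.2 ⟨?_, ?_⟩
        · have heq : ∑' J : ℕ, (if J < N then (1:ENNReal) else 0)
              = ∑ J ∈ Finset.range N, (if J < N then (1:ENNReal) else 0) := by
            refine tsum_eq_sum ?_
            intro b hb
            rw [Finset.mem_range] at hb
            simp [hb]
          rw [heq]
          have hle1 : ∑ J ∈ Finset.range N, (if J < N then (1:ENNReal) else 0)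
              ≤ (N : ENNReal) := by
            calc ∑ J ∈ Finset.range N, (if J < N then (1:ENNReal) else 0)
                ≤ ∑ _J ∈ Finset.range N, (1:ENNReal) :=
                  Finset.sum_le_sum (fun i _ => by split <;> simp)
              _ = N := by simp
          exact ne_top_of_le_ne_top (ENNReal.natCast_ne_top N) hle1
        · rw [ENNReal.tsum_mul_left, ENNReal.tsum_geometric]
          exact ENNReal.mul_ne_top ENNReal.ofReal_ne_top
            (ENNReal.inv_ne_top.2 (tsub_pos_of_lt hρ1).ne')
      have h0 : P {ω | ∃ᶠ J in atTop, ω ∈ E J} = 0 := measure_setOf_frequently_eq_zero hsum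
      have hae : ∀ᵐ ω ∂P, ¬ ∃ᶠ J in atTop, ω ∈ E J :=
        (MeasureTheory.measure_eq_zero_iff_ae_notMem (μ := P)).1 h0
      filter_upwards [hae] with ω hω
      rw [not_frequently] at hω
      filter_upwards [hω] with J hJ
      simp only [hEdef, Set.mem_setOf_eq] at hJ
      have hlt : (∑ f : Fin J → (Fin d → Bool), G (List.ofFn f) ω)
          < ENNReal.ofReal ((2:ℝ) ^ (-(J:ℝ) * (τq + b - δ))) := lt_of_not_ge hJ
      have hlt2 := lt_of_le_of_lt (hpt J ω) hlt
      exact (ENNReal.ofReal_lt_ofReal_iff (Real.rpow_pos_of_pos two_pos _)).1 hlt2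
    -- Borel–Cantelli II: infinitely many successes a.s.
    haveI : Encodable (Fin d → Bool) := Fintype.toEncodable _
    haveI : Denumerable (List (Fin d → Bool)) :=
      Denumerable.ofEncodableOfInfinite (List (Fin d → Bool))
    set e : ℕ ≃ List (Fin d → Bool) := (Denumerable.eqv (List (Fin d → Bool))).symm with hedef
    set s : ℕ → Set Ω := fun n => {ω | p (e n) ω = true} with hsdef
    have hsm : ∀ n, MeasurableSet (s n) := fun n => hmeasset _
    have hsind : iIndepSet s P := by
      rw [iIndepSet_iff_meas_biInter hsm]
      intro Sf
      have h1 := hindep.measure_inter_preimage_eq_mul (Sf.image e)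
        (sets := fun _ => ({true} : Set Bool)) (fun i _ => measurableSet_singleton true)
      have h2 : (⋂ n ∈ Sf, s n) = ⋂ w ∈ Sf.image e, p w ⁻¹' {true} := by
        ext ω
        simp only [hsdef, Set.mem_iInter, Finset.mem_image, Set.mem_preimage,
          Set.mem_singleton_iff, Set.mem_setOf_eq]
        constructor
        · rintro h w ⟨n, hn, rfl⟩
          exact h n hn
        · intro h n hn
          exact h (e n) ⟨n, hn, rfl⟩
      rw [h2, h1, Finset.prod_image (fun x _ y _ h => e.injective h)]
      exact Finset.prod_congr rfl (fun x _ => rfl)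
    have htop : ∑' n, P (s n) = ⊤ := by
      have he1 : ∑' n, P (s n) = ∑' w : List (Fin d → Bool), P {ω | p w ω = true} :=
        e.tsum_eq (fun w => P {ω | p w ω = true})
      rw [he1, aux_tsum_list (fun w => P {ω | p w ω = true})]
      refine top_unique ?_
      calc (⊤ : ENNReal) = ∑' (_ : ℕ), (1 : ENNReal) :=
            (ENNReal.tsum_const_eq_top_of_ne_zero one_ne_zero).symm
        _ ≤ ∑' n, ∑ f : Fin n → (Fin d → Bool), P {ω | p (List.ofFn f) ω = true} := by
            refine ENNReal.tsum_le_tsum (fun n => ?_)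
            have hcard : ∀ f : Fin n → (Fin d → Bool),
                P {ω | p (List.ofFn f) ω = true}
                  = ENNReal.ofReal ((2:ℝ) ^ (-(n:ℝ) * b)) := by
              intro f
              rw [hbern]
              congr 1
              rw [List.length_ofFn, hbdef]
              ring
            have hcA : Fintype.card (Fin d → Bool) = 2 ^ d := by simp
            have hcard1 : Fintype.card (Fin n → (Fin d → Bool)) = 2 ^ (d * n) := by
              rw [Fintype.card_fun, hcA, Fintype.card_fin, ← pow_mul]
            rw [Finset.sum_congr rfl (fun f _ => hcard f), Finset.sum_const,
              Finset.card_univ, hcard1, nsmul_eq_mul]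
            rw [show (((2 ^ (d * n) : ℕ)) : ENNReal)
                = ENNReal.ofReal (((2 ^ (d * n) : ℕ) : ℝ)) from (ENNReal.ofReal_natCast _).symm]
            rw [← ENNReal.ofReal_mul (by positivity)]
            refine ENNReal.one_le_ofReal.2 ?_
            have hc3 : (((2 ^ (d * n) : ℕ)) : ℝ) = (2:ℝ) ^ (((d * n : ℕ)) : ℝ) := by
              rw [Real.rpow_natCast]
              push_cast
              ring
            rw [hc3, ← Real.rpow_add two_pos]
            refine Real.one_le_rpow one_le_two ?_
            push_cast
            rw [hbdef]
            nlinarith [mul_nonneg (mul_nonneg hdpos.le (Nat.cast_nonneg (α := ℝ) n)) hη0.le]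
    have hlim := ProbabilityTheory.measure_limsup_eq_one hsm hsind htop
    have hmeaslim : MeasurableSet (limsup s atTop) := MeasurableSet.measurableSet_limsup hsm
    have haeinf : ∀ᵐ ω ∂P, ({w : List (Fin d → Bool) | p w ω = true}).Infinite := by
      have hcompl : P (limsup s atTop)ᶜ = 0 := by
        rw [measure_compl hmeaslim (measure_ne_top _ _), hlim, measure_univ]
        simp
      have hae2 : ∀ᵐ ω ∂P, ω ∈ limsup s atTop := by
        rw [ae_iff]
        exact hcompl
      filter_upwards [hae2] with ω hω
      rw [Filter.mem_limsup_iff_frequently_mem, Nat.frequently_atTop_iff_infinite] at hω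
      have himg : (e '' {n | ω ∈ s n}) ⊆ {w | p w ω = true} := by
        rintro w ⟨n, hn, rfl⟩
        exact hn
      exact Set.Infinite.mono himg (hω.image (e.injective.injOn))
    -- positivity of the M-sums
    have hTpos : ∀ ω, ({w : List (Fin d → Bool) | p w ω = true}).Infinite →
        ∀ J : ℕ, 0 < ∑ f : Fin J → (Fin d → Bool), M (List.ofFn f) ω ^ q := by
      intro ω hinf J
      obtain ⟨w, hw, hlen⟩ : ∃ w, p w ω = true ∧ J ≤ w.length := by
        by_contra hcon
        push_neg at hcon
        have hsub : {w : List (Fin d → Bool) | p w ω = true} ⊆ {l | l.length < J} :=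
          fun w hw => hcon w hw
        exact hinf (Set.Finite.subset (List.finite_length_lt _ J) hsub)
      have htake : (w.take J).length = J := by rw [List.length_take]; omega
      obtain ⟨f, hf⟩ := aux_ofFn_exists (w.take J) htake
      have hfw : List.ofFn f ++ w.drop J = w := by rw [hf]; exact List.take_append_drop J w
      have hMge : μ w ≤ M (List.ofFn f) ω := by
        rw [hM]
        have hbdd : BddAbove {x : ℝ | ∃ v, p (List.ofFn f ++ v) ω = true
            ∧ x = μ (List.ofFn f ++ v)} := by
          refine ⟨μ (List.ofFn f), ?_⟩
          rintro y ⟨u, hu, rfl⟩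
          exact hcap _ u
        have hmem : μ w ∈ {x : ℝ | ∃ v, p (List.ofFn f ++ v) ω = true
            ∧ x = μ (List.ofFn f ++ v)} := by
          refine ⟨w.drop J, ?_⟩
          rw [hfw]
          exact ⟨hw, rfl⟩
        exact le_csSup hbdd hmem
      have h1 : 0 < M (List.ofFn f) ω ^ q :=
        Real.rpow_pos_of_pos (lt_of_lt_of_le (hpos w) hMge) q
      have h2 : M (List.ofFn f) ω ^ q
          ≤ ∑ f' : Fin J → (Fin d → Bool), M (List.ofFn f') ω ^ q :=
        Finset.single_le_sum (fun f' _ => Real.rpow_nonneg (hMnonneg _ _) q)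
          (Finset.mem_univ f)
      linarith
    -- assemble
    have hδm : ∀ m : ℕ, 0 < (τq + b)/((m:ℝ)+1) := fun m => div_pos ha (by positivity)
    have hall := (ae_all_iff.2 (fun m : ℕ => hclaim _ (hδm m))).and haeinf
    filter_upwards [hall] with ω hω
    obtain ⟨hev, hinf⟩ := hω
    have hliminf : ∀ m : ℕ, ((τq + b - (τq + b)/((m:ℝ)+1) : ℝ) : EReal)
        ≤ Filter.liminf (fun J : ℕ =>
            ((-(1/(J:ℝ)) * Real.logb 2
              (∑ f : Fin J → (Fin d → Bool), M (List.ofFn f) ω ^ q) : ℝ) : EReal))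
            Filter.atTop := by
      intro m
      refine le_liminf_of_le (by isBoundedDefault) ?_
      filter_upwards [hev m, eventually_ge_atTop 1] with J hJ hJ1
      set T : ℝ := ∑ f : Fin J → (Fin d → Bool), M (List.ofFn f) ω ^ q with hTdef
      have hT0 : 0 < T := hTpos ω hinf J
      have hJ0 : (0:ℝ) < J := by exact_mod_cast hJ1
      have hlog : Real.logb 2 T < -(J:ℝ) * (τq + b - (τq + b)/((m:ℝ)+1)) :=
        (Real.logb_lt_iff_lt_rpow one_lt_two hT0).2 hJ
      have h5 : (1/(J:ℝ)) * Real.logb 2 T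
          < (1/(J:ℝ)) * (-(J:ℝ) * (τq + b - (τq + b)/((m:ℝ)+1))) :=
        mul_lt_mul_of_pos_left hlog (by positivity)
      have h6 : (1/(J:ℝ)) * (-(J:ℝ) * (τq + b - (τq + b)/((m:ℝ)+1)))
          = -(τq + b - (τq + b)/((m:ℝ)+1)) := by
        field_simp
      have h7 : τq + b - (τq + b)/((m:ℝ)+1) ≤ -(1/(J:ℝ)) * Real.logb 2 T := by
        nlinarith [h5, h6]
      exact_mod_cast h7
    refine le_of_forall_lt (fun c hc => ?_)
    induction c using EReal.rec with
    | bot => exact lt_of_lt_of_le (EReal.bot_lt_coe _) (hliminf 0)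
    | coe c =>
      have hca : c < τq + b := by exact_mod_cast hc
      obtain ⟨m, hm⟩ := exists_nat_one_div_lt
        (show (0:ℝ) < (τq + b - c)/(τq + b) from div_pos (by linarith) ha)
      have hlt : c < τq + b - (τq + b)/((m:ℝ)+1) := by
        have h8 : (τq + b) * (1/((m:ℝ)+1)) < (τq + b) * ((τq + b - c)/(τq + b)) :=
          mul_lt_mul_of_pos_left hm ha
        have h9 : (τq + b) * ((τq + b - c)/(τq + b)) = τq + b - c := by field_simp
        have h10 : (τq + b)/((m:ℝ)+1) = (τq + b) * (1/((m:ℝ)+1)) := by ring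
        linarith
      exact lt_of_lt_of_le (by exact_mod_cast hlt) (hliminf m)
    | top => exact absurd hc not_top_lt
end
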